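/- arXiv:1904.00266 — 3 statements merged into one kernel-verified Lean document; each statement's English description precedes it below -/
import Mathlib

section
/- There exists a partition of [ℕ]^ω (the infinite subsets of ℕ) into two pieces such that for every infinite X ⊆ ℕ, the set [X]^ω of infinite subsets of X intersects both pieces. (Equivalently, there is a non-Ramsey subset of [ℕ]^ω.) -/
/-- The equivalence relation of finite symmetric difference on `Set ℕ`. -/
def finSymmDiffSetoid : Setoid (Set ℕ) where
  r Y Z := (symmDiff Y Z).Finite
  iseqv := by
    refine ⟨fun Y => ?_, fun {Y Z} h => ?_, fun {Y Z W} h1 h2 => ?_⟩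
    · simp [symmDiff_self, Set.finite_empty]
    · rwa [symmDiff_comm]
    · exact (h1.union h2).subset (symmDiff_triangle Y Z W)

/-- A choice of representative for each finite-symmetric-difference class. -/
noncomputable def fsdRep (Y : Set ℕ) : Set ℕ :=
  (Quotient.mk finSymmDiffSetoid Y).out

lemma fsdRep_congr {Y Z : Set ℕ} (h : (symmDiff Y Z).Finite) : fsdRep Y = fsdRep Z := by
  unfold fsdRep
  exact congrArg Quotient.out (Quotient.sound h)

lemma fsdRep_equiv (Y : Set ℕ) : (symmDiff Y (fsdRep Y)).Finite := by
  have h := Quotient.mk_out (s := finSymmDiffSetoid) Y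
  have : (symmDiff ((Quotient.mk finSymmDiffSetoid Y).out) Y).Finite := h
  rw [symmDiff_comm] at this
  exact this

/-- There is a partition of the infinite subsets of `ℕ` into two pieces
(equivalently, a subset `𝒳` of `[ℕ]^ω` and its complement) such that for
every infinite `X ⊆ ℕ`, the family `[X]^ω` of infinite subsets of `X`
meets both pieces; i.e. there is a non-Ramsey set. -/
theorem exists_non_ramsey_set :
    ∃ 𝒳 : Set (Set ℕ), ∀ X : Set ℕ, X.Infinite →
      (∃ Y : Set ℕ, Y ⊆ X ∧ Y.Infinite ∧ Y ∈ 𝒳) ∧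
      (∃ Y : Set ℕ, Y ⊆ X ∧ Y.Infinite ∧ Y ∉ 𝒳) := by
  refine ⟨{Y | Even ((symmDiff Y (fsdRep Y)).ncard)}, fun X hX => ?_⟩
  obtain ⟨y, hy⟩ := hX.nonempty
  set r := fsdRep X with hr
  set X' := X \ {y} with hX'
  have hX'X : X' ⊆ X := Set.diff_subset
  have hX'inf : X'.Infinite := hX.diff (Set.finite_singleton y)
  have hrep : fsdRep X' = r := by
    apply fsdRep_congr
    have : symmDiff X' X ⊆ {y} := by
      intro z hz
      rcases Set.mem_symmDiff.1 hz with ⟨h1, h2⟩ | ⟨h1, h2⟩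
      · exact absurd (hX'X h1) h2
      · by_contra hzy
        exact h2 ⟨h1, hzy⟩
    exact (Set.finite_singleton y).subset this
  set S := symmDiff X r with hS
  have hSfin : S.Finite := fsdRep_equiv X
  set S' := symmDiff X' r with hS'
  -- parity flip
  have hflip : Even S'.ncard ↔ ¬ Even S.ncard := by
    by_cases hyr : y ∈ r
    · have hyS : y ∉ S := by
        intro h
        rcases Set.mem_symmDiff.1 h with ⟨_, h2⟩ | ⟨_, h2⟩
        · exact h2 hyr
        · exact h2 hy
      have heq : S' = insert y S := by
        ext z
        by_cases hzy : z = y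
        · subst hzy
          simp only [Set.mem_insert_iff, true_or, iff_true]
          exact Set.mem_symmDiff.2 (Or.inr ⟨hyr, fun h => h.2 rfl⟩)
        · simp only [Set.mem_insert_iff, hzy, false_or]
          constructor
          · intro h
            rcases Set.mem_symmDiff.1 h with ⟨h1, h2⟩ | ⟨h1, h2⟩
            · exact Set.mem_symmDiff.2 (Or.inl ⟨h1.1, h2⟩)
            · exact Set.mem_symmDiff.2 (Or.inr ⟨h1, fun hzX => h2 ⟨hzX, hzy⟩⟩)
          · intro h
            rcases Set.mem_symmDiff.1 h with ⟨h1, h2⟩ | ⟨h1, h2⟩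
            · exact Set.mem_symmDiff.2 (Or.inl ⟨⟨h1, hzy⟩, h2⟩)
            · exact Set.mem_symmDiff.2 (Or.inr ⟨h1, fun hz => h2 hz.1⟩)
      rw [heq, Set.ncard_insert_of_notMem hyS hSfin, Nat.even_add_one]
    · have hyS : y ∈ S := Set.mem_symmDiff.2 (Or.inl ⟨hy, hyr⟩)
      have heq : S' = S \ {y} := by
        ext z
        by_cases hzy : z = y
        · subst hzy
          simp only [Set.mem_diff, Set.mem_singleton_iff, not_true, and_false, iff_false]
          intro h
          rcases Set.mem_symmDiff.1 h with ⟨h1, _⟩ | ⟨h1, _⟩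
          · exact h1.2 rfl
          · exact hyr h1
        · simp only [Set.mem_diff, Set.mem_singleton_iff, hzy, not_false_iff, and_true]
          constructor
          · intro h
            rcases Set.mem_symmDiff.1 h with ⟨h1, h2⟩ | ⟨h1, h2⟩
            · exact Set.mem_symmDiff.2 (Or.inl ⟨h1.1, h2⟩)
            · exact Set.mem_symmDiff.2 (Or.inr ⟨h1, fun hzX => h2 ⟨hzX, hzy⟩⟩)
          · intro h
            rcases Set.mem_symmDiff.1 h with ⟨h1, h2⟩ | ⟨h1, h2⟩
            · exact Set.mem_symmDiff.2 (Or.inl ⟨⟨h1, hzy⟩, h2⟩)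
            · exact Set.mem_symmDiff.2 (Or.inr ⟨h1, fun hz => h2 hz.1⟩)
      have hcard : (S \ {y}).ncard + 1 = S.ncard :=
        Set.ncard_diff_singleton_add_one hyS hSfin
      rw [heq]
      constructor
      · intro h hEvenS
        rw [← hcard] at hEvenS
        exact (Nat.even_add_one.1 hEvenS) h
      · intro h
        by_contra h'
        exact h (hcard ▸ Nat.even_add_one.2 h')
  have hmemX : X ∈ {Y : Set ℕ | Even ((symmDiff Y (fsdRep Y)).ncard)} ↔ Even S.ncard := Iff.rfl
  have hmemX' : X' ∈ {Y : Set ℕ | Even ((symmDiff Y (fsdRep Y)).ncard)} ↔ Even S'.ncard := by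
    simp only [Set.mem_setOf_eq, hrep]
    exact Iff.rfl
  by_cases hE : Even S.ncard
  · exact ⟨⟨X, subset_rfl, hX, hmemX.2 hE⟩,
      ⟨X', hX'X, hX'inf, fun h => (hflip.1 (hmemX'.1 h)) hE⟩⟩
  · exact ⟨⟨X', hX'X, hX'inf, hmemX'.2 (hflip.2 hE)⟩,
      ⟨X, subset_rfl, hX, fun h => hE (hmemX.1 h)⟩⟩
end

section
/- Every Borel subset of the Baire space [ℕ]^ω is completely Ramsey: for each finite set s of natural numbers and infinite X ⊆ ℕ with s an initial segment of X, there is an infinite Y with s ⊑ Y ⊆ X such that the set [s,Y] = {Z ∈ [Y]^ω : s ⊑ Z} is either contained in the given Borel set or disjoint from it. -/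
/-- `s` is an initial segment of `X`: `s ⊆ X` and every element of `X`
not in `s` is greater than every element of `s`. -/
def InitSeg (s : Finset ℕ) (X : Set ℕ) : Prop :=
  ↑s ⊆ X ∧ ∀ x ∈ X, x ∉ s → ∀ a ∈ s, a < x

/-- The Baire space `[ℕ]^ω` of infinite subsets of `ℕ`. -/
abbrev BaireSp := {X : Set ℕ // X.Infinite}

/-- The metric (Baire space) topology on `[ℕ]^ω`, generated by the cones
`{X : s ⊑ X}` for finite `s`. -/
def baireTop : TopologicalSpace BaireSp :=
  .generateFrom {U | ∃ s : Finset ℕ, U = {X : BaireSp | InitSeg s X.1}}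

/-- The Ellentuck-style basic set `[s, Y] = {Z ∈ [Y]^ω : s ⊑ Z}`. -/
def baireCube (s : Finset ℕ) (Y : BaireSp) : Set BaireSp :=
  {Z : BaireSp | Z.1 ⊆ Y.1 ∧ InitSeg s Z.1}

set_option linter.unusedVariables false

namespace GP
open Set

/-- The set of naturals strictly above every element of `t`. -/
def above (t : Finset ℕ) : Set ℕ := {x | ∀ a ∈ t, a < x}

lemma above_anti {t u : Finset ℕ} (h : t ⊆ u) : above u ⊆ above t :=
  fun _ hx a ha => hx a (h ha)

lemma finite_compl_above (t : Finset ℕ) : {x : ℕ | x ∉ above t}.Finite := by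
  apply (Set.finite_Iic (t.sup id)).subset
  intro x hx
  simp only [above, mem_setOf_eq, not_forall] at hx
  obtain ⟨a, ha, hax⟩ := hx
  exact le_trans (not_lt.1 hax) (Finset.le_sup (f := id) ha)

lemma inter_above_infinite {S : Set ℕ} (hS : S.Infinite) (t : Finset ℕ) :
    (S ∩ above t).Infinite := by
  have := hS.diff (finite_compl_above t)
  apply this.mono
  intro x hx
  exact ⟨hx.1, not_not.1 hx.2⟩

/-- The combinatorial cube: infinite sets with initial segment `s` whose remaining
elements lie in `A`. -/
def cube (s : Finset ℕ) (A : Set ℕ) : Set BaireSp :=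
  {Z | InitSeg s Z.1 ∧ Z.1 ⊆ ↑s ∪ A}

lemma cube_mono {s : Finset ℕ} {A B : Set ℕ} (h : A ⊆ B) : cube s A ⊆ cube s B :=
  fun _ hZ => ⟨hZ.1, hZ.2.trans (union_subset_union_right _ h)⟩

/-- A set is Ramsey if every cube can be refined into it or away from it. -/
def Ramsey (𝒳 : Set BaireSp) : Prop :=
  ∀ (s : Finset ℕ) (A : Set ℕ), A.Infinite → A ⊆ above s →
    ∃ B, B ⊆ A ∧ B.Infinite ∧ (cube s B ⊆ 𝒳 ∨ cube s B ∩ 𝒳 = ∅)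

lemma initSeg_union {s t : Finset ℕ} {Z : Set ℕ} (hs : InitSeg s Z) (ht : InitSeg t Z) :
    InitSeg (s ∪ t) Z := by
  constructor
  · rw [Finset.coe_union]; exact union_subset hs.1 ht.1
  · intro x hx hxst a ha
    rcases Finset.mem_union.1 ha with h | h
    · exact hs.2 x hx (fun hxs => hxst (Finset.mem_union_left _ hxs)) a h
    · exact ht.2 x hx (fun hxs => hxst (Finset.mem_union_right _ hxs)) a h

lemma initSeg_of_subset {s t : Finset ℕ} {Z : Set ℕ} (h : InitSeg t Z) (hst : s ⊆ t)
    (hmid : ∀ x ∈ t, x ∉ s → ∀ a ∈ s, a < x) : InitSeg s Z := by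
  refine ⟨(Finset.coe_subset.2 hst).trans h.1, ?_⟩
  intro x hx hxs a ha
  by_cases hxt : x ∈ t
  · exact hmid x hxt hxs a ha
  · exact h.2 x hx hxt a (hst ha)

lemma initSeg_insert_sInf {t : Finset ℕ} {Z : Set ℕ} (h : InitSeg t Z)
    (hne : (Z \ ↑t).Nonempty) : InitSeg (insert (sInf (Z \ ↑t)) t) Z := by
  set b := sInf (Z \ ↑t) with hb
  have hbmem : b ∈ Z \ ↑t := Nat.sInf_mem hne
  constructor
  · rw [Finset.coe_insert]
    exact Set.insert_subset hbmem.1 h.1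
  · intro x hx hxbt a ha
    have hxt : x ∉ t := fun hh => hxbt (Finset.mem_insert_of_mem hh)
    rcases Finset.mem_insert.1 ha with rfl | hat
    · have hxZ : x ∈ Z \ ↑t := ⟨hx, hxt⟩
      have := Nat.sInf_le hxZ
      exact lt_of_le_of_ne this (fun hh => hxbt (by rw [hh]; exact Finset.mem_insert_self _ _))
    · exact h.2 x hx hxt a hat

lemma diff_initSeg_nonempty {t : Finset ℕ} {Z : Set ℕ} (hZ : Z.Infinite) :
    (Z \ ↑t).Nonempty :=
  (hZ.diff (t.finite_toSet)).nonempty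


/-- Auxiliary fusion sequence. -/
noncomputable def fuseSeq (F : {S : Set ℕ // S.Infinite} → Finset ℕ → ℕ → {S : Set ℕ // S.Infinite})
    (A : {S : Set ℕ // S.Infinite}) (s₀ : Finset ℕ) :
    ℕ → {S : Set ℕ // S.Infinite} × Finset ℕ
  | 0 => (F A s₀ 0, s₀)
  | n + 1 =>
    let p := fuseSeq F A s₀ n
    (F ⟨p.1.1 ∩ above {sInf p.1.1}, inter_above_infinite p.1.2 _⟩
        (insert (sInf p.1.1) p.2) (n + 1),
      insert (sInf p.1.1) p.2)

/-- The generic fusion lemma. -/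
lemma fuse (D : ℕ → Set ℕ → Finset ℕ → Prop)
    (transfer : ∀ n S B t, B ∩ above t ⊆ S → D n S t → D n B t)
    (exist : ∀ n t (S : Set ℕ), S.Infinite → ∃ T, T ⊆ S ∧ T.Infinite ∧ D n T t)
    (s₀ : Finset ℕ) (A : Set ℕ) (hA : A.Infinite) (hAa : A ⊆ above s₀) :
    ∃ B, B ⊆ A ∧ B.Infinite ∧
      ∀ (t : Finset ℕ) (n : ℕ), ↑t ⊆ ↑s₀ ∪ B → n ≤ (t \ s₀).card → D n B t := by
  classical
  -- decide finitely many pairs at once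
  have decide_fin : ∀ (P : Finset (ℕ × Finset ℕ)) (S : Set ℕ), S.Infinite →
      ∃ T, T ⊆ S ∧ T.Infinite ∧ ∀ p ∈ P, D p.1 T p.2 := by
    intro P
    induction P using Finset.induction_on with
    | empty => exact fun S hS => ⟨S, subset_rfl, hS, by simp⟩
    | insert _ _ hnotmem ih =>
      rename_i q P'
      intro S hS
      obtain ⟨T₁, hT₁S, hT₁inf, hT₁⟩ := ih S hS
      obtain ⟨T₂, hT₂T₁, hT₂inf, hT₂⟩ := exist q.1 q.2 T₁ hT₁inf
      refine ⟨T₂, hT₂T₁.trans hT₁S, hT₂inf, ?_⟩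
      intro p hp
      rcases Finset.mem_insert.1 hp with rfl | hp'
      · exact hT₂
      · exact transfer _ _ _ _ (inter_subset_left.trans hT₂T₁) (hT₁ p hp')
  have step : ∀ (S : {S : Set ℕ // S.Infinite}) (u : Finset ℕ) (m : ℕ),
      ∃ T : {S : Set ℕ // S.Infinite}, T.1 ⊆ S.1 ∧
        ∀ n t, n ≤ m → t ⊆ u → D n T.1 t := by
    intro S u m
    obtain ⟨T, hTS, hTinf, hT⟩ :=
      decide_fin ((Finset.range (m + 1)) ×ˢ u.powerset) S.1 S.2
    refine ⟨⟨T, hTinf⟩, hTS, ?_⟩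
    intro n t hn htu
    exact hT (n, t) (Finset.mem_product.2
      ⟨Finset.mem_range.2 (Nat.lt_succ_of_le hn), Finset.mem_powerset.2 htu⟩)
  choose F hF1 hF2 using step
  set g := fuseSeq F ⟨A, hA⟩ s₀ with hg
  set b : ℕ → ℕ := fun n => sInf (g n).1.1 with hbdef
  have hstep : ∀ n, (g (n + 1)).1.1 ⊆ (g n).1.1 ∩ above {b n} := by
    intro n
    exact hF1 _ _ _
  have hchain : ∀ n m, n ≤ m → (g m).1.1 ⊆ (g n).1.1 := by
    intro n m h
    induction h with
    | refl => exact subset_rfl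
    | step h ih => exact ((hstep _).trans inter_subset_left).trans ih
  have hbmem : ∀ n, b n ∈ (g n).1.1 := fun n => Nat.sInf_mem (g n).1.2.nonempty
  have hbmono : StrictMono b := by
    apply strictMono_nat_of_lt_succ
    intro n
    have := (hstep n) (hbmem (n + 1))
    exact this.2 (b n) (Finset.mem_singleton_self _)
  have hg0 : (g 0).1.1 ⊆ A := hF1 _ _ _
  have hgA : ∀ n, (g n).1.1 ⊆ A := fun n => (hchain 0 n (Nat.zero_le _)).trans hg0
  have hu : ∀ n, (g n).2 = s₀ ∪ (Finset.range n).image b := by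
    intro n
    induction n with
    | zero => simp [hg, fuseSeq]
    | succ k ih =>
      show (fuseSeq F ⟨A, hA⟩ s₀ (k+1)).2 = _
      rw [fuseSeq]
      simp only
      rw [show (fuseSeq F ⟨A, hA⟩ s₀ k).2 = (g k).2 from rfl, ih]
      rw [Finset.range_add_one, Finset.image_insert, Finset.union_insert]
  have hdecg : ∀ m n t, n ≤ m → t ⊆ (g m).2 → D n (g m).1.1 t := by
    intro m n t hn ht
    cases m with
    | zero => exact hF2 _ _ _ n t hn ht
    | succ k =>
      have : g (k + 1) =
          (F ⟨(g k).1.1 ∩ above {sInf (g k).1.1}, inter_above_infinite (g k).1.2 _⟩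
            (insert (sInf (g k).1.1) (g k).2) (k + 1),
            insert (sInf (g k).1.1) (g k).2) := by
        rw [hg]; rw [fuseSeq]
      have h1 : (g (k+1)).1 = F ⟨(g k).1.1 ∩ above {sInf (g k).1.1},
          inter_above_infinite (g k).1.2 _⟩ (insert (sInf (g k).1.1) (g k).2) (k + 1) := by
        rw [this]
      have h2 : (g (k+1)).2 = insert (sInf (g k).1.1) (g k).2 := by rw [this]
      rw [h1]
      exact hF2 _ _ _ n t hn (h2 ▸ ht)
  refine ⟨Set.range b, ?_, Set.infinite_range_of_injective hbmono.injective, ?_⟩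
  · rintro x ⟨k, rfl⟩
    exact hgA k (hbmem k)
  · intro t n ht hn
    rcases eq_or_ne (t \ s₀) ∅ with hts | hts
    · -- t ⊆ s₀, n = 0
      have htsub : t ⊆ s₀ := Finset.sdiff_eq_empty_iff_subset.1 hts
      have hn0 : n = 0 := by
        rw [hts] at hn; simpa using hn
      subst hn0
      apply transfer 0 (g 0).1.1 (Set.range b) t
      · rintro x ⟨⟨k, rfl⟩, -⟩
        exact hchain 0 k (Nat.zero_le _) (hbmem k)
      · apply hdecg 0 0 t le_rfl
        rw [hu 0]; simpa using htsub
    · have htsne : (t \ s₀).Nonempty := Finset.nonempty_iff_ne_empty.2 hts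
      set x₀ := (t \ s₀).max' htsne with hx₀
      have hx₀mem : x₀ ∈ t \ s₀ := (t \ s₀).max'_mem htsne
      have hx₀B : x₀ ∈ Set.range b := by
        have := ht (Finset.mem_coe.2 (Finset.sdiff_subset hx₀mem))
        rcases this with h | h
        · exact absurd (Finset.mem_coe.1 h) (Finset.mem_sdiff.1 hx₀mem).2
        · exact h
      obtain ⟨k₀, hk₀⟩ := hx₀B
      -- every element of t \ s₀ is b j with j ≤ k₀
      have hidx : ∀ x ∈ t \ s₀, ∃ j ≤ k₀, b j = x := by
        intro x hx
        have hxB : x ∈ Set.range b := by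
          have := ht (Finset.mem_coe.2 (Finset.sdiff_subset hx))
          rcases this with h | h
          · exact absurd (Finset.mem_coe.1 h) (Finset.mem_sdiff.1 hx).2
          · exact h
        obtain ⟨j, rfl⟩ := hxB
        refine ⟨j, ?_, rfl⟩
        have hle : b j ≤ x₀ := (t \ s₀).le_max' _ hx
        rw [← hk₀] at hle
        exact hbmono.le_iff_le.1 hle
      have htsubm : t ⊆ (g (k₀ + 1)).2 := by
        rw [hu]
        intro x hx
        by_cases hxs : x ∈ s₀
        · exact Finset.mem_union_left _ hxs
        · obtain ⟨j, hj, rfl⟩ := hidx x (Finset.mem_sdiff.2 ⟨hx, hxs⟩)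
          exact Finset.mem_union_right _ (Finset.mem_image.2
            ⟨j, Finset.mem_range.2 (Nat.lt_succ_of_le hj), rfl⟩)
      have hcard : (t \ s₀).card ≤ k₀ + 1 := by
        have hsub : t \ s₀ ⊆ (Finset.range (k₀ + 1)).image b := by
          intro x hx
          obtain ⟨j, hj, rfl⟩ := hidx x hx
          exact Finset.mem_image.2 ⟨j, Finset.mem_range.2 (Nat.lt_succ_of_le hj), rfl⟩
        calc (t \ s₀).card ≤ ((Finset.range (k₀ + 1)).image b).card :=
              Finset.card_le_card hsub
          _ ≤ (Finset.range (k₀ + 1)).card := Finset.card_image_le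
          _ = k₀ + 1 := Finset.card_range _
      apply transfer n (g (k₀ + 1)).1.1 (Set.range b) t
      · rintro x ⟨⟨j, rfl⟩, hxab⟩
        have : b k₀ < b j := by
          rw [hk₀]
          exact hxab x₀ (Finset.mem_sdiff.1 hx₀mem).1
        have hj : k₀ + 1 ≤ j := hbmono.lt_iff_lt.1 this
        exact hchain (k₀ + 1) j hj (hbmem j)
      · exact hdecg (k₀ + 1) n t (hn.trans hcard) htsubm


section Galvin

variable (𝒳 : Set BaireSp)

/-- `A` accepts `t`: every element of the cube `[t, A]` is in `𝒳`. -/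
def acc (A : Set ℕ) (t : Finset ℕ) : Prop := cube t (A ∩ above t) ⊆ 𝒳

/-- `A` rejects `t`: no infinite subset of `A` accepts `t`. -/
def rej (A : Set ℕ) (t : Finset ℕ) : Prop :=
  ∀ B, B ⊆ A → B.Infinite → ¬ acc 𝒳 B t

variable {𝒳}

lemma acc_inter_above {A : Set ℕ} {t : Finset ℕ} :
    acc 𝒳 (A ∩ above t) t ↔ acc 𝒳 A t := by
  unfold acc
  rw [Set.inter_assoc, Set.inter_self]

lemma acc_mono {A B : Set ℕ} {t : Finset ℕ} (h : B ∩ above t ⊆ A ∩ above t)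
    (hA : acc 𝒳 A t) : acc 𝒳 B t :=
  fun Z hZ => hA (cube_mono h hZ)

lemma accrej_transfer {n : ℕ} {S B : Set ℕ} {t : Finset ℕ} (h : B ∩ above t ⊆ S)
    (hD : acc 𝒳 S t ∨ rej 𝒳 S t) : acc 𝒳 B t ∨ rej 𝒳 B t := by
  have hBsub : B ∩ above t ⊆ S ∩ above t := subset_inter h inter_subset_right
  rcases hD with hD | hD
  · exact Or.inl (acc_mono hBsub hD)
  · right
    intro B' hB' hB'inf hacc
    have h1 : B' ∩ above t ⊆ S := (inter_subset_inter_left _ hB').trans h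
    have h2 : (B' ∩ above t).Infinite := inter_above_infinite hB'inf t
    exact hD _ h1 h2 (acc_inter_above.2 hacc)

lemma accrej_exist (t : Finset ℕ) (S : Set ℕ) (hS : S.Infinite) :
    ∃ T, T ⊆ S ∧ T.Infinite ∧ (acc 𝒳 T t ∨ rej 𝒳 T t) := by
  by_cases h : rej 𝒳 S t
  · exact ⟨S, subset_rfl, hS, Or.inr h⟩
  · unfold rej at h
    push_neg at h
    obtain ⟨B, hBS, hBinf, hacc⟩ := h
    exact ⟨B, hBS, hBinf, Or.inl hacc⟩

/-- If `B` rejects `t` (and decides everything), then only finitely many one-point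
extensions of `t` inside `B` are accepted. -/
lemma rej_step {B : Set ℕ} {t : Finset ℕ} (hrej : rej 𝒳 B t) :
    {b | b ∈ B ∩ above t ∧ acc 𝒳 B (insert b t)}.Finite := by
  by_contra hinf
  rw [← Set.not_infinite, not_not] at hinf
  set D := {b | b ∈ B ∩ above t ∧ acc 𝒳 B (insert b t)} with hD
  have hDB : D ⊆ B := fun b hb => hb.1.1
  apply hrej D hDB hinf
  intro Z hZ
  obtain ⟨hZinit, hZsub⟩ := hZ
  have hne : (Z.1 \ ↑t).Nonempty := diff_initSeg_nonempty Z.2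
  set b := sInf (Z.1 \ ↑t) with hb
  have hbmem : b ∈ Z.1 \ ↑t := Nat.sInf_mem hne
  have hbD : b ∈ D := by
    rcases hZsub hbmem.1 with h | h
    · exact absurd (Finset.mem_coe.1 h) hbmem.2
    · exact h.1
  apply hbD.2
  constructor
  · exact initSeg_insert_sInf hZinit hne
  · intro x hx
    by_cases hxbt : x ∈ (insert b t : Finset ℕ)
    · exact Or.inl (Finset.mem_coe.2 hxbt)
    · have hxt : x ∉ t := fun hh => hxbt (Finset.mem_insert_of_mem hh)
      have hxD : x ∈ D ∩ above t := by
        rcases hZsub hx with h | h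
        · exact absurd (Finset.mem_coe.1 h) hxt
        · exact h
      right
      refine ⟨hxD.1.1.1, ?_⟩
      intro a ha
      rcases Finset.mem_insert.1 ha with hab | hat
      · have hle : b ≤ x := Nat.sInf_le ⟨hx, hxt⟩
        have hne' : b ≠ x := fun hh => hxbt (by rw [← hh]; exact Finset.mem_insert_self _ _)
        rw [hab]
        exact lt_of_le_of_ne hle hne'
      · exact hxD.2 a hat

end Galvin

/-- Auxiliary fusion sequence for hereditary rejection. -/
noncomputable def fuseSeq2 (F : {S : Set ℕ // S.Infinite} → Finset ℕ → {S : Set ℕ // S.Infinite})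
    (B : {S : Set ℕ // S.Infinite}) : ℕ → {S : Set ℕ // S.Infinite} × Finset ℕ
  | 0 => (F B ∅, ∅)
  | n + 1 =>
    let p := fuseSeq2 F B n
    (F p.1 (insert (sInf p.1.1) p.2), insert (sInf p.1.1) p.2)

/-- Fusion II: from rejection to hereditary rejection. -/
lemma hered_rej {𝒳 : Set BaireSp} (s₀ : Finset ℕ) (B : Set ℕ) (hB : B.Infinite)
    (hBa : B ⊆ above s₀)
    (hdec : ∀ t : Finset ℕ, ↑t ⊆ ↑s₀ ∪ B → acc 𝒳 B t ∨ rej 𝒳 B t)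
    (hrej : rej 𝒳 B s₀) :
    ∃ C, C ⊆ B ∧ C.Infinite ∧
      ∀ t : Finset ℕ, s₀ ⊆ t → ↑t ⊆ ↑s₀ ∪ C → rej 𝒳 B t := by
  classical
  -- the "bad" set to avoid, given the finite set `u` of already chosen points
  set E : Finset ℕ → Set ℕ := fun u =>
    {x | x ∈ B ∧ ∃ t' : Finset ℕ, s₀ ⊆ t' ∧ t' ⊆ s₀ ∪ u ∧ x ∈ above t' ∧
      acc 𝒳 B (insert x t')} with hE
  have step2 : ∀ (S : {S : Set ℕ // S.Infinite}) (u : Finset ℕ),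
      ∃ T : {S : Set ℕ // S.Infinite}, T.1 ⊆ S.1 ∩ above u ∧
        ((E u).Finite → T.1 ∩ E u = ∅) := by
    intro S u
    by_cases h : (E u).Finite
    · refine ⟨⟨(S.1 ∩ above u) \ E u, (inter_above_infinite S.2 u).diff h⟩,
        diff_subset, fun _ => ?_⟩
      ext x
      simp only [Set.mem_inter_iff, Set.mem_diff, Set.mem_empty_iff_false, iff_false]
      rintro ⟨⟨-, hx2⟩, hx3⟩
      exact hx2 hx3
    · exact ⟨⟨S.1 ∩ above u, inter_above_infinite S.2 u⟩, subset_rfl,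
        fun hf => absurd hf h⟩
  choose F hF1 hF2 using step2
  set g := fuseSeq2 F ⟨B, hB⟩ with hg
  set c : ℕ → ℕ := fun n => sInf (g n).1.1 with hcdef
  have hu : ∀ n, (g n).2 = (Finset.range n).image c := by
    intro n
    induction n with
    | zero => simp [hg, fuseSeq2]
    | succ k ih =>
      show (fuseSeq2 F ⟨B, hB⟩ (k+1)).2 = _
      rw [fuseSeq2]
      simp only
      rw [show (fuseSeq2 F ⟨B, hB⟩ k).2 = (g k).2 from rfl, ih]
      rw [Finset.range_add_one, Finset.image_insert]
  have hunfold : ∀ k, g (k + 1) =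
      (F (g k).1 (insert (c k) (g k).2), insert (c k) (g k).2) := by
    intro k
    rw [hg]; rw [fuseSeq2]
  have hstep : ∀ n, (g (n + 1)).1.1 ⊆ (g n).1.1 ∩ above (insert (c n) (g n).2) := by
    intro n
    rw [hunfold n]
    exact hF1 _ _
  have hchain : ∀ n m, n ≤ m → (g m).1.1 ⊆ (g n).1.1 := by
    intro n m h
    induction h with
    | refl => exact subset_rfl
    | step h ih => exact ((hstep _).trans inter_subset_left).trans ih
  have hcmem : ∀ n, c n ∈ (g n).1.1 := fun n => Nat.sInf_mem (g n).1.2.nonempty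
  have hg0 : (g 0).1.1 ⊆ B := by
    have : (g 0).1.1 ⊆ B ∩ above ∅ := hF1 _ _
    exact this.trans inter_subset_left
  have hgB : ∀ n, (g n).1.1 ⊆ B := fun n => (hchain 0 n (Nat.zero_le _)).trans hg0
  have hcB : ∀ n, c n ∈ B := fun n => hgB n (hcmem n)
  have hcmono : StrictMono c := by
    apply strictMono_nat_of_lt_succ
    intro n
    have := (hstep n) (hcmem (n + 1))
    exact this.2 (c n) (Finset.mem_insert_self _ _)
  have hSu : ∀ n, (g n).1.1 ⊆ above (g n).2 := by
    intro n
    cases n with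
    | zero =>
      rw [hu 0]
      simp only [Finset.range_zero, Finset.image_empty]
      intro x _ a ha
      exact absurd ha (Finset.notMem_empty a)
    | succ k =>
      have h1 := hstep k
      have h2 : (g (k+1)).2 = insert (c k) (g k).2 := by rw [hunfold k]
      rw [h2]
      exact h1.trans inter_subset_right
  have havoid : ∀ n, (E ((g n).2)).Finite → (g n).1.1 ∩ E ((g n).2) = ∅ := by
    intro n
    cases n with
    | zero =>
      have h2 : (g 0).2 = ∅ := by rw [hu]; simp
      rw [h2]
      exact hF2 ⟨B, hB⟩ ∅
    | succ k =>
      have h1 : (g (k+1)).1 = F (g k).1 (insert (c k) (g k).2) := by rw [hunfold k]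
      have h2 : (g (k+1)).2 = insert (c k) (g k).2 := by rw [hunfold k]
      rw [h1, h2]
      exact hF2 _ _
  -- u n consists of points of B
  have huB : ∀ n, ↑((g n).2) ⊆ B := by
    intro n
    rw [hu n]
    intro x hx
    obtain ⟨j, -, rfl⟩ := Finset.mem_image.1 (Finset.mem_coe.1 hx)
    exact hcB j
  -- the rejection invariant
  have hR : ∀ n, ∀ t : Finset ℕ, s₀ ⊆ t → t ⊆ s₀ ∪ (g n).2 → rej 𝒳 B t := by
    intro n
    induction n with
    | zero =>
      intro t hst hts
      have h2 : (g 0).2 = ∅ := by rw [hu]; simp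
      rw [h2, Finset.union_empty] at hts
      have : t = s₀ := Finset.Subset.antisymm hts hst
      rwa [this]
    | succ k ih =>
      intro t hst hts
      have h2 : (g (k+1)).2 = insert (c k) (g k).2 := by rw [hunfold k]
      rw [h2] at hts
      by_cases hck : c k ∈ t
      · -- t = insert (c k) t''
        set t'' := t.erase (c k) with ht''
        have hcks : c k ∉ s₀ := by
          intro hmem
          exact lt_irrefl (c k) (hBa (hcB k) (c k) hmem)
        have hst'' : s₀ ⊆ t'' := fun a ha =>
          Finset.mem_erase.2 ⟨fun hh => hcks (hh ▸ ha), hst ha⟩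
        have hts'' : t'' ⊆ s₀ ∪ (g k).2 := by
          intro a ha
          have ha' := Finset.mem_erase.1 ha
          have := hts ha'.2
          rcases Finset.mem_union.1 this with h | h
          · exact Finset.mem_union_left _ h
          · rcases Finset.mem_insert.1 h with h' | h'
            · exact absurd h' ha'.1
            · exact Finset.mem_union_right _ h'
        have hrejt'' : rej 𝒳 B t'' := ih t'' hst'' hts''
        -- E (g k).2 is finite
        have hEfin : (E ((g k).2)).Finite := by
          have hcover : E ((g k).2) ⊆
              ⋃ t' ∈ ((s₀ ∪ (g k).2).powerset : Finset (Finset ℕ)),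
                {x | x ∈ B ∩ above t' ∧ s₀ ⊆ t' ∧ acc 𝒳 B (insert x t')} := by
            rintro x ⟨hxB, t', h1, h2', h3, h4⟩
            refine Set.mem_biUnion ?_ ⟨⟨hxB, h3⟩, h1, h4⟩
            exact Finset.mem_coe.2 (Finset.mem_powerset.2 h2')
          apply Set.Finite.subset _ hcover
          apply Set.Finite.biUnion ((s₀ ∪ (g k).2).powerset.finite_toSet)
          intro t' ht'
          by_cases hs₀t' : s₀ ⊆ t'
          · have hrejt' : rej 𝒳 B t' :=
              ih t' hs₀t' (Finset.mem_powerset.1 (Finset.mem_coe.1 ht'))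
            apply (rej_step hrejt').subset
            rintro x ⟨h1, h2', h3⟩
            exact ⟨h1, h3⟩
          · apply Set.Finite.subset (Set.finite_empty)
            rintro x ⟨-, h2', -⟩
            exact absurd h2' hs₀t'
        have hckE : c k ∉ E ((g k).2) := by
          intro hmem
          have := havoid k hEfin
          have : c k ∈ (g k).1.1 ∩ E ((g k).2) := ⟨hcmem k, hmem⟩
          rw [havoid k hEfin] at this
          exact this
        have hckab : c k ∈ above t'' := by
          have h1 : c k ∈ above s₀ := hBa (hcB k)
          have h2' : c k ∈ above ((g k).2) := hSu k (hcmem k)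
          intro a ha
          rcases Finset.mem_union.1 (hts'' ha) with h | h
          · exact h1 a h
          · exact h2' a h
        have hnacc : ¬ acc 𝒳 B (insert (c k) t'') := by
          intro hacc
          exact hckE ⟨hcB k, t'', hst'', hts'', hckab, hacc⟩
        have hteq : insert (c k) t'' = t := Finset.insert_erase hck
        have htB : ↑t ⊆ ↑s₀ ∪ B := by
          intro x hx
          rcases Finset.mem_union.1 (hts (Finset.mem_coe.1 hx)) with h | h
          · exact Or.inl (Finset.mem_coe.2 h)
          · rcases Finset.mem_insert.1 h with h' | h'
            · exact Or.inr (h' ▸ hcB k)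
            · exact Or.inr (huB k (Finset.mem_coe.2 h'))
        rcases hdec t htB with hacc | hrej'
        · rw [← hteq] at hacc
          exact absurd hacc hnacc
        · exact hrej'
      · -- c k ∉ t: use IH
        apply ih t hst
        intro a ha
        rcases Finset.mem_union.1 (hts ha) with h | h
        · exact Finset.mem_union_left _ h
        · rcases Finset.mem_insert.1 h with h' | h'
          · exact absurd (h' ▸ ha) hck
          · exact Finset.mem_union_right _ h'
  -- conclude
  refine ⟨Set.range c, ?_, Set.infinite_range_of_injective hcmono.injective, ?_⟩
  · rintro x ⟨k, rfl⟩; exact hcB k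
  · intro t hst hts
    set N := t.sup id + 1 with hN
    apply hR N t hst
    intro x hx
    rcases hts (Finset.mem_coe.2 hx) with h | h
    · exact Finset.mem_union_left _ (Finset.mem_coe.1 h)
    · obtain ⟨j, rfl⟩ := h
      apply Finset.mem_union_right
      rw [hu N]
      apply Finset.mem_image.2
      refine ⟨j, Finset.mem_range.2 ?_, rfl⟩
      have h1 : j ≤ c j := hcmono.le_apply
      have h2 : c j ≤ t.sup id := Finset.le_sup (f := id) hx
      omega


/-- The openness property: membership is witnessed by a cone around an initial segment. -/
def Opn (𝒳 : Set BaireSp) : Prop :=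
  ∀ Z ∈ 𝒳, ∃ t : Finset ℕ, InitSeg t Z.1 ∧ ∀ W : BaireSp, InitSeg t W.1 → W ∈ 𝒳

/-- Galvin's lemma: open sets are Ramsey. -/
lemma open_ramsey {𝒳 : Set BaireSp} (hop : Opn 𝒳) : Ramsey 𝒳 := by
  intro s A hA hAa
  obtain ⟨B, hBA, hBinf, hdec'⟩ :=
    fuse (fun _ S t => acc 𝒳 S t ∨ rej 𝒳 S t)
      (fun n S B t h hD => accrej_transfer (n := n) h hD)
      (fun _ t S hS => accrej_exist t S hS) s A hA hAa
  have hBa : B ⊆ above s := hBA.trans hAa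
  have hdec : ∀ t : Finset ℕ, ↑t ⊆ ↑s ∪ B → acc 𝒳 B t ∨ rej 𝒳 B t :=
    fun t ht => hdec' t 0 ht (Nat.zero_le _)
  rcases hdec s (by intro x hx; exact Or.inl hx) with hacc | hrej
  · refine ⟨B, hBA, hBinf, Or.inl ?_⟩
    have : B ∩ above s = B := Set.inter_eq_left.2 hBa
    unfold acc at hacc
    rwa [this] at hacc
  · obtain ⟨C, hCB, hCinf, hC⟩ := hered_rej s B hBinf hBa hdec hrej
    refine ⟨C, hCB.trans hBA, hCinf, Or.inr ?_⟩
    rw [Set.eq_empty_iff_forall_notMem]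
    rintro Z ⟨⟨hZinit, hZsub⟩, hZX⟩
    obtain ⟨t₀, ht₀init, ht₀cone⟩ := hop Z hZX
    set t := t₀ ∪ s with htdef
    have htinit : InitSeg t Z.1 := initSeg_union ht₀init hZinit
    have hst : s ⊆ t := Finset.subset_union_right
    have htC : ↑t ⊆ ↑s ∪ C := by
      intro x hx
      rcases Finset.mem_union.1 (Finset.mem_coe.1 hx) with h | h
      · exact hZsub (ht₀init.1 (Finset.mem_coe.2 h))
      · exact Or.inl (Finset.mem_coe.2 h)
    have hrejt : rej 𝒳 B t := hC t hst htC
    -- the tail of Z accepts t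
    set B'' := Z.1 ∩ above t with hB''
    have hB''inf : B''.Infinite := inter_above_infinite Z.2 t
    have hB''B : B'' ⊆ B := by
      rintro x ⟨hxZ, hxab⟩
      rcases hZsub hxZ with h | h
      · exfalso
        exact lt_irrefl x (hxab x (hst (Finset.mem_coe.1 h)))
      · exact hCB h
    apply hrejt B'' hB''B hB''inf
    intro W hW
    apply ht₀cone
    apply initSeg_of_subset hW.1 Finset.subset_union_left
    intro x hx hxt₀ a ha
    have hxZ : x ∈ Z.1 := by
      rcases Finset.mem_union.1 hx with h | h
      · exact absurd h hxt₀
      · exact hZinit.1 (Finset.mem_coe.2 h)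
    exact ht₀init.2 x hxZ hxt₀ a ha

lemma ramsey_empty : Ramsey (∅ : Set BaireSp) := by
  intro s A hA hAa
  exact ⟨A, subset_rfl, hA, Or.inr (Set.inter_empty _)⟩

lemma ramsey_compl {𝒳 : Set BaireSp} (h : Ramsey 𝒳) : Ramsey 𝒳ᶜ := by
  intro s A hA hAa
  obtain ⟨B, hBA, hBinf, hB⟩ := h s A hA hAa
  refine ⟨B, hBA, hBinf, ?_⟩
  rcases hB with hB | hB
  · right
    rw [Set.eq_empty_iff_forall_notMem]
    rintro Z ⟨hZ1, hZ2⟩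
    exact hZ2 (hB hZ1)
  · left
    intro Z hZ
    intro hZX
    rw [Set.eq_empty_iff_forall_notMem] at hB
    exact hB Z ⟨hZ, hZX⟩

/-- For an infinite set with initial segment `s`, extend to a longer initial segment
with exactly `n` extra elements. -/
lemma exists_initseg_card {s : Finset ℕ} {Z : Set ℕ} (hZ : Z.Infinite) (hs : InitSeg s Z)
    (n : ℕ) : ∃ t : Finset ℕ, s ⊆ t ∧ InitSeg t Z ∧ ↑t ⊆ Z ∧ (t \ s).card = n := by
  induction n with
  | zero => exact ⟨s, subset_rfl, hs, hs.1, by simp⟩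
  | succ k ih =>
    obtain ⟨t, hst, htinit, htZ, hcard⟩ := ih
    have hne : (Z \ ↑t).Nonempty := diff_initSeg_nonempty hZ
    set b := sInf (Z \ ↑t) with hb
    have hbmem : b ∈ Z \ ↑t := Nat.sInf_mem hne
    have hbt : b ∉ t := fun hh => hbmem.2 (Finset.mem_coe.2 hh)
    have hbs : b ∉ s := fun hh => hbt (hst hh)
    refine ⟨insert b t, hst.trans (Finset.subset_insert _ _),
      initSeg_insert_sInf htinit hne, ?_, ?_⟩
    · rw [Finset.coe_insert]
      exact Set.insert_subset hbmem.1 htZ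
    · rw [Finset.insert_sdiff_of_notMem _ hbs,
        Finset.card_insert_of_notMem (fun hh => hbt (Finset.mem_sdiff.1 hh).1), hcard]

/-- Ramsey sets are closed under countable unions. -/
lemma ramsey_iUnion {f : ℕ → Set BaireSp} (hf : ∀ n, Ramsey (f n)) :
    Ramsey (⋃ n, f n) := by
  intro s A hA hAa
  set D : ℕ → Set ℕ → Finset ℕ → Prop := fun n S t =>
    cube t (S ∩ above t) ⊆ f n ∨ cube t (S ∩ above t) ∩ f n = ∅ with hD
  have transfer : ∀ n S B t, B ∩ above t ⊆ S → D n S t → D n B t := by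
    intro n S B t h hd
    have hsub : cube t (B ∩ above t) ⊆ cube t (S ∩ above t) :=
      cube_mono (subset_inter h inter_subset_right)
    rcases hd with hd | hd
    · exact Or.inl (hsub.trans hd)
    · right
      rw [Set.eq_empty_iff_forall_notMem]
      rintro Z ⟨hZ1, hZ2⟩
      rw [Set.eq_empty_iff_forall_notMem] at hd
      exact hd Z ⟨hsub hZ1, hZ2⟩
  have exist : ∀ n t (S : Set ℕ), S.Infinite → ∃ T, T ⊆ S ∧ T.Infinite ∧ D n T t := by
    intro n t S hS
    obtain ⟨T, hTS, hTinf, hT⟩ := hf n t (S ∩ above t) (inter_above_infinite hS t)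
      inter_subset_right
    refine ⟨T, hTS.trans inter_subset_left, hTinf, ?_⟩
    have : T ∩ above t = T := Set.inter_eq_left.2 (hTS.trans inter_subset_right)
    rw [hD]
    simp only [this]
    exact hT
  obtain ⟨B, hBA, hBinf, hdec⟩ := fuse D transfer exist s A hA hAa
  have hBa : B ⊆ above s := hBA.trans hAa
  -- the auxiliary open set
  set 𝒴 : Set BaireSp := {Z | ∃ (t : Finset ℕ) (n : ℕ), InitSeg t Z.1 ∧ s ⊆ t ∧
    ↑t ⊆ ↑s ∪ B ∧ n ≤ (t \ s).card ∧ cube t (B ∩ above t) ⊆ f n} with h𝒴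
  have h𝒴op : Opn 𝒴 := by
    rintro Z ⟨t, n, h1, h2, h3, h4, h5⟩
    exact ⟨t, h1, fun W hW => ⟨t, n, hW, h2, h3, h4, h5⟩⟩
  obtain ⟨C, hCB, hCinf, hC⟩ := open_ramsey h𝒴op s B hBinf hBa
  -- membership in the decisive cubes
  have hmemcube : ∀ (Z : BaireSp) (t : Finset ℕ), s ⊆ t → InitSeg t Z.1 →
      Z.1 ⊆ ↑s ∪ C → Z ∈ cube t (B ∩ above t) := by
    intro Z t hst htinit hZsub
    refine ⟨htinit, ?_⟩
    intro x hx
    by_cases hxt : x ∈ t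
    · exact Or.inl (Finset.mem_coe.2 hxt)
    · right
      have hxs : x ∉ s := fun hh => hxt (hst hh)
      have hxC : x ∈ C := by
        rcases hZsub hx with h | h
        · exact absurd (Finset.mem_coe.1 h) hxs
        · exact h
      exact ⟨hCB hxC, fun a ha => htinit.2 x hx hxt a ha⟩
  rcases hC with hC | hC
  · -- positive case
    refine ⟨C, hCB.trans hBA, hCinf, Or.inl ?_⟩
    rintro Z ⟨hZinit, hZsub⟩
    obtain ⟨t, n, h1, h2, h3, h4, h5⟩ := hC ⟨hZinit, hZsub⟩
    have : Z ∈ cube t (B ∩ above t) := hmemcube Z t h2 h1 hZsub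
    exact Set.mem_iUnion.2 ⟨n, h5 this⟩
  · -- negative case
    refine ⟨C, hCB.trans hBA, hCinf, Or.inr ?_⟩
    rw [Set.eq_empty_iff_forall_notMem]
    rintro Z ⟨⟨hZinit, hZsub⟩, hZX⟩
    obtain ⟨n, hZn⟩ := Set.mem_iUnion.1 hZX
    obtain ⟨t, hst, htinit, htZ, hcard⟩ := exists_initseg_card Z.2 hZinit n
    have htB : ↑t ⊆ ↑s ∪ B := by
      intro x hx
      rcases hZsub (htZ hx) with h | h
      · exact Or.inl h
      · exact Or.inr (hCB h)
    rcases hdec t n htB (le_of_eq hcard.symm) with hd | hd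
    · -- then Z ∈ 𝒴, contradicting disjointness
      have hZ𝒴 : Z ∈ 𝒴 := ⟨t, n, htinit, hst, htB, le_of_eq hcard.symm, hd⟩
      rw [Set.eq_empty_iff_forall_notMem] at hC
      exact hC Z ⟨⟨hZinit, hZsub⟩, hZ𝒴⟩
    · rw [Set.eq_empty_iff_forall_notMem] at hd
      exact hd Z ⟨hmemcube Z t hst htinit hZsub, hZn⟩



lemma initSeg_empty (Z : Set ℕ) : InitSeg ∅ Z := by
  constructor
  · simp
  · intro x _ _ a ha
    exact absurd ha (Finset.notMem_empty a)

/-- Every open set of the Baire topology has the `Opn` property. -/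
lemma isOpen_opn {U : Set BaireSp} (hU : @IsOpen BaireSp baireTop U) : Opn U := by
  have h : TopologicalSpace.GenerateOpen
      {U | ∃ s : Finset ℕ, U = {X : BaireSp | InitSeg s X.1}} U := hU
  induction h with
  | basic V hV =>
    obtain ⟨s, rfl⟩ := hV
    intro Z hZ
    exact ⟨s, hZ, fun W hW => hW⟩
  | univ =>
    intro Z _
    exact ⟨∅, initSeg_empty Z.1, fun W _ => Set.mem_univ W⟩
  | inter V₁ V₂ h₁ h₂ ih₁ ih₂ =>
    rintro Z ⟨hZ₁, hZ₂⟩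
    obtain ⟨t₁, ht₁, hc₁⟩ := ih₁ h₁ Z hZ₁
    obtain ⟨t₂, ht₂, hc₂⟩ := ih₂ h₂ Z hZ₂
    refine ⟨t₁ ∪ t₂, initSeg_union ht₁ ht₂, fun W hW => ?_⟩
    have key : ∀ (u v : Finset ℕ), InitSeg u Z.1 → InitSeg v Z.1 →
        InitSeg (u ∪ v) W.1 → InitSeg u W.1 := by
      intro u v hu hv huv
      apply initSeg_of_subset huv Finset.subset_union_left
      intro x hx hxu a ha
      have hxZ : x ∈ Z.1 := by
        rcases Finset.mem_union.1 hx with h | h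
        · exact absurd h hxu
        · exact hv.1 (Finset.mem_coe.2 h)
      exact hu.2 x hxZ hxu a ha
    constructor
    · exact hc₁ W (key t₁ t₂ ht₁ ht₂ hW)
    · apply hc₂ W
      apply key t₂ t₁ ht₂ ht₁
      rwa [Finset.union_comm]
  | sUnion S hS ih =>
    rintro Z hZ
    rw [Set.mem_sUnion] at hZ
    obtain ⟨V, hVS, hZV⟩ := hZ
    obtain ⟨t, ht, hc⟩ := ih V hVS (hS V hVS) Z hZV
    exact ⟨t, ht, fun W hW => Set.mem_sUnion.2 ⟨V, hVS, hc W hW⟩⟩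

lemma borel_ramsey {𝒳 : Set BaireSp}
    (hBorel : @MeasurableSet BaireSp (@borel BaireSp baireTop) 𝒳) : Ramsey 𝒳 := by
  have hBorel' : @MeasurableSet _ (MeasurableSpace.generateFrom
      {s : Set BaireSp | @IsOpen BaireSp baireTop s}) 𝒳 := hBorel
  refine MeasurableSpace.generateFrom_induction {s : Set BaireSp | @IsOpen BaireSp baireTop s}
    (fun s _ => Ramsey s) ?_ ?_ ?_ ?_ 𝒳 hBorel'
  · exact fun t ht _ => open_ramsey (isOpen_opn ht)
  · exact ramsey_empty
  · exact fun t _ ht => ramsey_compl ht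
  · exact fun f _ hf => ramsey_iUnion hf

end GP

/-- Galvin–Prikry theorem: every Borel subset of the Baire space `[ℕ]^ω`
is completely Ramsey. -/
theorem galvin_prikry (𝒳 : Set BaireSp)
    (hBorel : @MeasurableSet BaireSp (@borel BaireSp baireTop) 𝒳) :
    ∀ (s : Finset ℕ) (X : BaireSp), InitSeg s X.1 →
      ∃ Y : BaireSp, Y.1 ⊆ X.1 ∧ InitSeg s Y.1 ∧
        (baireCube s Y ⊆ 𝒳 ∨ baireCube s Y ∩ 𝒳 = ∅) := by
  intro s X hsX
  have hram : GP.Ramsey 𝒳 := GP.borel_ramsey hBorel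
  set A := X.1 \ ↑s with hA
  have hAinf : A.Infinite := X.2.diff (s.finite_toSet)
  have hAa : A ⊆ GP.above s := by
    rintro x ⟨hxX, hxs⟩ a ha
    exact hsX.2 x hxX (fun hh => hxs (Finset.mem_coe.2 hh)) a ha
  obtain ⟨B, hBA, hBinf, hB⟩ := hram s A hAinf hAa
  have hYinf : (↑s ∪ B : Set ℕ).Infinite := hBinf.mono Set.subset_union_right
  refine ⟨⟨↑s ∪ B, hYinf⟩, ?_, ?_, ?_⟩
  · apply Set.union_subset hsX.1
    exact hBA.trans Set.diff_subset
  · constructor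
    · exact Set.subset_union_left
    · intro x hx hxs a ha
      rcases hx with h | h
      · exact absurd (Finset.mem_coe.1 h) hxs
      · exact hBA.trans hAa h a ha
  · have hcube : baireCube s ⟨↑s ∪ B, hYinf⟩ = GP.cube s B := by
      ext Z
      exact and_comm
    rw [hcube]
    exact hB
end

section
/- A subset 𝒳 of [ℕ]^ω is completely Ramsey if and only if 𝒳 has the property of Baire with respect to the Ellentuck topology. -/
/-- The Ellentuck basic set `[s, Y] = {Z ∈ [Y]^ω : s ⊑ Z}`. -/
def ellCube (s : Finset ℕ) (Y : BaireSp) : Set BaireSp :=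
  {Z : BaireSp | Z.1 ⊆ Y.1 ∧ InitSeg s Z.1}

/-- The Ellentuck topology on `[ℕ]^ω`, generated by the sets `[s, X]`. -/
def ellTop : TopologicalSpace BaireSp :=
  .generateFrom {U | ∃ (s : Finset ℕ) (X : BaireSp), U = ellCube s X}

/-- `𝒳` is completely Ramsey. -/
def CompletelyRamsey (𝒳 : Set BaireSp) : Prop :=
  ∀ (s : Finset ℕ) (X : BaireSp), InitSeg s X.1 →
    ∃ Y : BaireSp, Y.1 ⊆ X.1 ∧ InitSeg s Y.1 ∧
      (ellCube s Y ⊆ 𝒳 ∨ ellCube s Y ∩ 𝒳 = ∅)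

/-- `𝒳` has the property of Baire with respect to the Ellentuck topology:
its symmetric difference with some Ellentuck-open set is Ellentuck-meager. -/
def EllBaireProperty (𝒳 : Set BaireSp) : Prop :=
  ∃ U : Set BaireSp, @IsOpen BaireSp ellTop U ∧ @IsMeagre BaireSp ellTop (symmDiff 𝒳 U)

open Set

section Basics

lemma initSeg_mono {s : Finset ℕ} {Z X : Set ℕ} (h : InitSeg s X) (h1 : ↑s ⊆ Z)
    (h2 : Z ⊆ X) : InitSeg s Z :=
  ⟨h1, fun x hx hxs a ha => h.2 x (h2 hx) hxs a ha⟩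

lemma initSeg_union {s t : Finset ℕ} {Z : Set ℕ} (hs : InitSeg s Z) (ht : InitSeg t Z) :
    InitSeg (s ∪ t) Z := by
  constructor
  · intro x hx
    rcases Finset.mem_union.1 (by exact_mod_cast hx) with h | h
    · exact hs.1 (by exact_mod_cast h)
    · exact ht.1 (by exact_mod_cast h)
  · intro x hx hxs a ha
    rcases Finset.mem_union.1 ha with h | h
    · exact hs.2 x hx (fun hc => hxs (Finset.mem_union_left _ hc)) a h
    · exact ht.2 x hx (fun hc => hxs (Finset.mem_union_right _ hc)) a h

lemma initSeg_trans {s u : Finset ℕ} {Z : Set ℕ} (h1 : InitSeg s ↑u) (h2 : InitSeg u Z) :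
    InitSeg s Z := by
  refine ⟨fun x hx => h2.1 (h1.1 hx), fun x hx hxs a ha => ?_⟩
  by_cases hxu : x ∈ u
  · exact h1.2 x (by exact_mod_cast hxu) hxs a ha
  · exact h2.2 x hx hxu a (h1.1 (by exact_mod_cast ha))

lemma initSeg_finset {s u : Finset ℕ} {Z : Set ℕ} (h : InitSeg s Z) (h1 : s ⊆ u)
    (h2 : ↑u ⊆ Z) : InitSeg s ↑u :=
  ⟨by exact_mod_cast h1, fun x hx hxs a ha => h.2 x (h2 hx) hxs a ha⟩

/-- The Ellentuck cubes form a topological basis. -/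
lemma ell_basis :
    @TopologicalSpace.IsTopologicalBasis BaireSp ellTop
      {U | ∃ (s : Finset ℕ) (X : BaireSp), U = ellCube s X} := by
  letI := ellTop
  refine ⟨?_, ?_, rfl⟩
  · rintro _ ⟨s₁, X₁, rfl⟩ _ ⟨s₂, X₂, rfl⟩ Z ⟨⟨hZ1, hs1⟩, hZ2, hs2⟩
    refine ⟨ellCube (s₁ ∪ s₂) Z, ⟨s₁ ∪ s₂, Z, rfl⟩, ⟨subset_rfl, initSeg_union hs1 hs2⟩, ?_⟩
    rintro W ⟨hW, hWs⟩
    have hu : (↑(s₁ ∪ s₂) : Set ℕ) ⊆ Z.1 := fun x hx => by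
      rcases Finset.mem_union.1 (by exact_mod_cast hx) with h | h
      · exact hs1.1 (by exact_mod_cast h)
      · exact hs2.1 (by exact_mod_cast h)
    have h1 : InitSeg s₁ W.1 := initSeg_trans (initSeg_finset hs1 Finset.subset_union_left hu) hWs
    have h2 : InitSeg s₂ W.1 := initSeg_trans (initSeg_finset hs2 Finset.subset_union_right hu) hWs
    exact ⟨⟨hW.trans hZ1, h1⟩, hW.trans hZ2, h2⟩
  · refine Set.eq_univ_of_forall fun Z => ?_
    exact ⟨ellCube ∅ Z, ⟨∅, Z, rfl⟩, subset_rfl, by simp [InitSeg]⟩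

lemma ellCube_isOpen (s : Finset ℕ) (Y : BaireSp) : @IsOpen BaireSp ellTop (ellCube s Y) :=
  TopologicalSpace.GenerateOpen.basic _ ⟨s, Y, rfl⟩

lemma ell_isOpen_iff {U : Set BaireSp} :
    @IsOpen BaireSp ellTop U ↔
      ∀ Z ∈ U, ∃ (s : Finset ℕ) (X : BaireSp), Z ∈ ellCube s X ∧ ellCube s X ⊆ U := by
  letI := ellTop
  rw [ell_basis.isOpen_iff]
  constructor
  · intro h Z hZ
    obtain ⟨v, ⟨s, X, rfl⟩, hv1, hv2⟩ := h Z hZ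
    exact ⟨s, X, hv1, hv2⟩
  · intro h Z hZ
    obtain ⟨s, X, h1, h2⟩ := h Z hZ
    exact ⟨ellCube s X, ⟨s, X, rfl⟩, h1, h2⟩

end Basics
section Forcing

variable (𝒪 : Set BaireSp)

/-- `X` accepts `s` (w.r.t. target `𝒪`): every infinite set with initial segment `s`
contained in `s ∪ X` belongs to `𝒪`. -/
def Accepts (s : Finset ℕ) (X : Set ℕ) : Prop :=
  ∀ Z : BaireSp, InitSeg s Z.1 → Z.1 ⊆ ↑s ∪ X → Z ∈ 𝒪

/-- `X` rejects `s`: no infinite subset of `X` accepts `s`. -/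
def Rejects (s : Finset ℕ) (X : Set ℕ) : Prop :=
  ∀ V : Set ℕ, V.Infinite → V ⊆ X → ¬ Accepts 𝒪 s V

variable {𝒪}

lemma Accepts.anti {s : Finset ℕ} {X X' : Set ℕ} (h : Accepts 𝒪 s X) (hs : X' ⊆ X) :
    Accepts 𝒪 s X' :=
  fun Z h1 h2 => h Z h1 (h2.trans (Set.union_subset_union_right _ hs))

lemma Rejects.anti {s : Finset ℕ} {X X' : Set ℕ} (h : Rejects 𝒪 s X) (hs : X' ⊆ X) :
    Rejects 𝒪 s X' :=
  fun V hV hVX => h V hV (hVX.trans hs)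

lemma not_rejects_iff {s : Finset ℕ} {X : Set ℕ} :
    ¬ Rejects 𝒪 s X ↔ ∃ V : Set ℕ, V.Infinite ∧ V ⊆ X ∧ Accepts 𝒪 s V := by
  simp only [Rejects, not_forall, not_not, exists_prop]

/-- Generic construction of a recursive sequence with invariant `P` and step relation `R`. -/
lemma exists_seq {α : Type*} (P : ℕ → α → Prop) (R : ℕ → α → α → Prop) (a0 : α)
    (h0 : P 0 a0) (step : ∀ n a, P n a → ∃ b, P (n + 1) b ∧ R n a b) :
    ∃ f : ℕ → α, f 0 = a0 ∧ (∀ n, P n (f n)) ∧ ∀ n, R n (f n) (f (n + 1)) := by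
  choose! g hg1 hg2 using step
  refine ⟨fun n => Nat.rec a0 (fun n a => g n a) n, rfl, ?_⟩
  have hP : ∀ n, P n (Nat.rec a0 (fun n a => g n a) n) := by
    intro n
    induction n with
    | zero => exact h0
    | succ n ih => exact hg1 n _ ih
  exact ⟨hP, fun n => hg2 n _ (hP n)⟩

/-- If `X` rejects `u`, there is an infinite `Y ⊆ X` rejecting `insert m u` for every
`m ∈ Y`. -/
lemma reject_spread {u : Finset ℕ} {X : Set ℕ} (hX : X.Infinite)
    (hrej : Rejects 𝒪 u X) :
    ∃ Y : Set ℕ, Y.Infinite ∧ Y ⊆ X ∧ ∀ m ∈ Y, Rejects 𝒪 (insert m u) Y := by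
  -- build the decision sequence
  have step : ∀ (n : ℕ) (W : Set ℕ), (W.Infinite ∧ W ⊆ X) →
      ∃ W' : Set ℕ, (W'.Infinite ∧ W' ⊆ X) ∧
        (W' ⊆ W ∩ Set.Ioi (sInf W) ∧
          (Accepts 𝒪 (insert (sInf W) u) W' ∨ Rejects 𝒪 (insert (sInf W) u) W')) := by
    intro n W ⟨hW, hWX⟩
    by_cases h : Rejects 𝒪 (insert (sInf W) u) (W ∩ Set.Ioi (sInf W))
    · exact ⟨W ∩ Set.Ioi (sInf W),
        ⟨(hW.diff (Set.finite_Iic (sInf W))).mono (by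
          intro x hx; exact ⟨hx.1, by simpa using hx.2⟩),
         Set.inter_subset_left.trans hWX⟩, subset_rfl, Or.inr h⟩
    · obtain ⟨V, hV, hVs, hVa⟩ := not_rejects_iff.1 h
      exact ⟨V, ⟨hV, hVs.trans (Set.inter_subset_left.trans hWX)⟩, hVs, Or.inl hVa⟩
  obtain ⟨F, hF0, hFP, hFR⟩ := exists_seq _ _ X ⟨hX, subset_rfl⟩ step
  set x : ℕ → ℕ := fun n => sInf (F n) with hx
  have hmem : ∀ n, x n ∈ F n := fun n => Nat.sInf_mem (hFP n).1.nonempty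
  have hsub : ∀ m n, n ≤ m → F m ⊆ F n := by
    intro m n h
    induction m with
    | zero => simpa [Nat.le_zero.1 h]
    | succ m ih =>
      rcases Nat.lt_or_ge n (m+1) with h' | h'
      · exact ((hFR m).1.trans Set.inter_subset_left).trans (ih (Nat.lt_succ_iff.1 h'))
      · have : n = m + 1 := le_antisymm h h'
        simp [this]
  have hgt : ∀ n m, n < m → x n < x m := by
    intro n m h
    have : x m ∈ F (n+1) := hsub m (n+1) h (hmem m)
    have := (hFR n).1 this
    simpa using this.2
  have hxmono : StrictMono x := fun n m h => hgt n m h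
  -- the "good" indices
  by_cases hG : {n : ℕ | Accepts 𝒪 (insert (x n) u) (F (n+1))}.Infinite
  · -- derive a contradiction with hrej
    exfalso
    set G := {n : ℕ | Accepts 𝒪 (insert (x n) u) (F (n+1))}
    have hYinf : (x '' G).Infinite := hG.image (Set.injOn_of_injective hxmono.injective)
    have hYX : x '' G ⊆ X := by
      rintro _ ⟨n, _, rfl⟩; exact (hFP n).2 (hmem n)
    refine hrej (x '' G) hYinf hYX ?_
    intro Z hZs hZsub
    -- find the least element of Z \ u
    have hZu : (Z.1 \ ↑u).Nonempty := by
      rcases (Z.2.diff (Finset.finite_toSet u)).nonempty with ⟨z, hz⟩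
      exact ⟨z, hz⟩
    set m := sInf (Z.1 \ ↑u) with hm
    have hmZ : m ∈ Z.1 \ ↑u := Nat.sInf_mem hZu
    have hmG : m ∈ x '' G := by
      rcases hZsub hmZ.1 with h | h
      · exact absurd h hmZ.2
      · exact h
    obtain ⟨j, hj, hjx⟩ := hmG
    refine hj Z ?_ ?_
    · -- InitSeg (insert (x j) u) Z.1
      constructor
      · intro y hy
        rcases Finset.mem_insert.1 (by exact_mod_cast hy) with h | h
        · rw [h, hjx]; exact hmZ.1
        · exact hZs.1 (by exact_mod_cast h)
      · intro y hy hyu a ha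
        have hyu' : y ∉ u := fun hc => hyu (Finset.mem_insert_of_mem hc)
        rcases Finset.mem_insert.1 ha with h | h
        · subst h
          rw [hjx]
          have hle : m ≤ y := Nat.sInf_le ⟨hy, hyu'⟩
          rcases hle.lt_or_eq with h | h
          · exact h
          · exact absurd (by rw [← hjx] at h; rw [← h]; exact Finset.mem_insert_self _ _) hyu
        · exact hZs.2 y hy hyu' a h
    · -- Z.1 ⊆ insert (x j) u ∪ F (j+1)
      intro y hy
      by_cases hyu : y ∈ (↑(insert (x j) u) : Set ℕ)
      · exact Or.inl hyu
      · right
        have hyu' : y ∉ (↑u : Set ℕ) := fun hc =>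
          hyu (by exact_mod_cast Finset.mem_insert_of_mem (by exact_mod_cast hc))
        have hyY : y ∈ x '' G := by
          rcases hZsub hy with h | h
          · exact absurd h hyu'
          · exact h
        obtain ⟨i, hi, hix⟩ := hyY
        have hym : m < y := by
          have hle : m ≤ y := Nat.sInf_le ⟨hy, fun hc => hyu' hc⟩
          rcases hle.lt_or_eq with h | h
          · exact h
          · exfalso; apply hyu
            rw [← h, ← hjx]
            exact_mod_cast Finset.mem_insert_self _ _
        have hij : j < i := by
          by_contra hc
          push_neg at hc
          have := hxmono.le_iff_le.2 hc
          rw [hix, hjx] at this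
          omega
        rw [← hix]
        exact hsub i (j+1) hij (hmem i)
  · -- all but finitely many indices are rejecting
    rw [Set.not_infinite] at hG
    obtain ⟨N, hN⟩ : ∃ N, ∀ n, N ≤ n → Rejects 𝒪 (insert (x n) u) (F (n+1)) := by
      rcases hG.bddAbove with ⟨N, hNb⟩
      refine ⟨N + 1, fun n hn => ?_⟩
      rcases (hFR n).2 with h | h
      · exact absurd (hNb h) (by omega)
      · exact h
    refine ⟨x '' Set.Ici N, ?_, ?_, ?_⟩
    · exact (Set.Ici_infinite N).image (Set.injOn_of_injective hxmono.injective)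
    · rintro _ ⟨n, _, rfl⟩; exact (hFP n).2 (hmem n)
    · rintro _ ⟨n, hn, rfl⟩
      intro V hV hVs hVa
      -- V ∩ Ioi (x n) ⊆ F (n+1) accepts, contradiction
      have hsubV : V ∩ Set.Ioi (x n) ⊆ F (n+1) := by
        rintro y ⟨hyV, hyI⟩
        obtain ⟨i, _, hix⟩ := hVs hyV
        have : n < i := by
          by_contra hc
          push_neg at hc
          have := hxmono.le_iff_le.2 hc
          rw [hix] at this
          simp only [Set.mem_Ioi] at hyI
          omega
        rw [← hix]
        exact hsub i (n+1) this (hmem i)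
      have hVinf : (V ∩ Set.Ioi (x n)).Infinite := by
        have : V ∩ Set.Ioi (x n) = V \ Set.Iic (x n) := by
          ext y
          simp only [Set.mem_inter_iff, Set.mem_diff, Set.mem_Ioi, Set.mem_Iic]
          constructor <;> rintro ⟨h1, h2⟩ <;> exact ⟨h1, by omega⟩
        rw [this]
        exact hV.diff (Set.finite_Iic _)
      exact hN n hn _ hVinf hsubV (hVa.anti Set.inter_subset_left)

end Forcing
section Fusion

variable {𝒪 : Set BaireSp}

lemma reject_spread_list (L : List (Finset ℕ)) {X : Set ℕ} (hX : X.Infinite)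
    (hrej : ∀ u ∈ L, Rejects 𝒪 u X) :
    ∃ Y : Set ℕ, Y.Infinite ∧ Y ⊆ X ∧ ∀ u ∈ L, ∀ m ∈ Y, Rejects 𝒪 (insert m u) Y := by
  induction L generalizing X with
  | nil => exact ⟨X, hX, subset_rfl, by simp⟩
  | cons u L ih =>
    obtain ⟨Y₁, hY₁, hY₁X, h1⟩ := reject_spread hX (hrej u (List.mem_cons_self))
    obtain ⟨Y, hY, hYY₁, h2⟩ := ih hY₁
      (fun v hv => (hrej v (List.mem_cons_of_mem _ hv)).anti hY₁X)
    refine ⟨Y, hY, hYY₁.trans hY₁X, ?_⟩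
    intro v hv m hm
    rw [List.mem_cons] at hv
    rcases hv with rfl | hv
    · exact (h1 m (hYY₁ hm)).anti hYY₁
    · exact h2 v hv m hm

lemma reject_fusion {s : Finset ℕ} {X : Set ℕ} (hX : X.Infinite)
    (hrej : Rejects 𝒪 s X) :
    ∃ Y : Set ℕ, Y.Infinite ∧ Y ⊆ X ∧ ∀ t : Finset ℕ, ↑t ⊆ Y → Rejects 𝒪 (s ∪ t) Y := by
  classical
  set P : ℕ → Finset ℕ × Set ℕ → Prop := fun _ p =>
    p.2.Infinite ∧ p.2 ⊆ X ∧ (∀ a ∈ p.1, ∀ z ∈ p.2, a < z) ∧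
      ∀ t ⊆ p.1, Rejects 𝒪 (s ∪ t) p.2 with hP
  set R : ℕ → Finset ℕ × Set ℕ → Finset ℕ × Set ℕ → Prop := fun _ p q =>
    ∃ m, q.1 = insert m p.1 ∧ m ∈ p.2 ∧ q.2 ⊆ p.2 ∧ ∀ z ∈ q.2, m < z with hR
  have step : ∀ n p, P n p → ∃ q, P (n + 1) q ∧ R n p q := by
    rintro n ⟨F, X'⟩ ⟨hinf, hsub, habv, hrej'⟩
    set L : List (Finset ℕ) := F.powerset.toList.map (s ∪ ·) with hL
    have hLrej : ∀ u ∈ L, Rejects 𝒪 u X' := by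
      intro u hu
      simp only [hL, List.mem_map, Finset.mem_toList, Finset.mem_powerset] at hu
      obtain ⟨t, ht, rfl⟩ := hu
      exact hrej' t ht
    obtain ⟨Y', hY'inf, hY'X, hY'⟩ := reject_spread_list L hinf hLrej
    set y := sInf Y' with hy
    have hyY : y ∈ Y' := Nat.sInf_mem hY'inf.nonempty
    refine ⟨⟨insert y F, Y' ∩ Set.Ioi y⟩, ⟨?_, ?_, ?_, ?_⟩, y, rfl, hY'X hyY, ?_, ?_⟩
    · have : Y' ∩ Set.Ioi y = Y' \ Set.Iic y := by
        ext z
        simp only [Set.mem_inter_iff, Set.mem_diff, Set.mem_Ioi, Set.mem_Iic]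
        constructor <;> rintro ⟨h1, h2⟩ <;> exact ⟨h1, by omega⟩
      rw [this]
      exact hY'inf.diff (Set.finite_Iic _)
    · exact (Set.inter_subset_left.trans hY'X).trans hsub
    · intro a ha z hz
      rcases Finset.mem_insert.1 ha with rfl | ha
      · exact hz.2
      · exact habv a ha z (hY'X hz.1)
    · intro t ht
      by_cases hyt : y ∈ t
      · have ht0 : t.erase y ⊆ F := by
          intro a ha
          have := ht (Finset.mem_of_mem_erase ha)
          rcases Finset.mem_insert.1 this with rfl | h
          · exact absurd rfl (Finset.ne_of_mem_erase ha)
          · exact h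
        have hmem : s ∪ t.erase y ∈ L := by
          simp only [hL, List.mem_map, Finset.mem_toList, Finset.mem_powerset]
          exact ⟨t.erase y, ht0, rfl⟩
        have := hY' _ hmem y hyY
        have heq : insert y (s ∪ t.erase y) = s ∪ t := by
          rw [← Finset.union_insert, Finset.insert_erase hyt]
        rw [heq] at this
        exact this.anti Set.inter_subset_left
      · have ht' : t ⊆ F := fun a ha => by
          rcases Finset.mem_insert.1 (ht ha) with rfl | h
          · exact absurd ha hyt
          · exact h
        exact (hrej' t ht').anti (Set.inter_subset_left.trans hY'X)
    · exact Set.inter_subset_left.trans hY'X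
    · exact fun z hz => hz.2
  obtain ⟨F, hF0, hFP, hFR⟩ := exists_seq P R (∅, X)
    ⟨hX, subset_rfl, by simp, fun t ht => by
      rw [Finset.subset_empty.1 ht, Finset.union_empty]; exact hrej⟩ step
  set y : ℕ → ℕ := fun n => (hFR n).choose with hydef
  have hy : ∀ n, (F (n+1)).1 = insert (y n) (F n).1 ∧ y n ∈ (F n).2 ∧
      (F (n+1)).2 ⊆ (F n).2 ∧ ∀ z ∈ (F (n+1)).2, y n < z := fun n => (hFR n).choose_spec
  have hchain : ∀ m n, n ≤ m → (F m).2 ⊆ (F n).2 := by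
    intro m n h
    induction m with
    | zero => simp [Nat.le_zero.1 h]
    | succ m ih =>
      rcases Nat.lt_or_ge n (m+1) with h' | h'
      · exact (hy m).2.2.1.trans (ih (Nat.lt_succ_iff.1 h'))
      · have : n = m + 1 := le_antisymm h h'
        simp [this]
  have hymem : ∀ n m, n ≤ m → y m ∈ (F n).2 := fun n m h => hchain m n h (hy m).2.1
  have hymono : StrictMono y := by
    apply strictMono_nat_of_lt_succ
    intro n
    exact (hy n).2.2.2 _ (hymem (n+1) (n+1) le_rfl)
  have hFn : ∀ n, ∀ z, z ∈ (F n).1 ↔ ∃ i < n, z = y i := by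
    intro n
    induction n with
    | zero => simp [hF0]
    | succ n ih =>
      intro z
      rw [(hy n).1, Finset.mem_insert]
      constructor
      · rintro (rfl | h)
        · exact ⟨n, Nat.lt_succ_self n, rfl⟩
        · obtain ⟨i, hi, rfl⟩ := (ih z).1 h
          exact ⟨i, by omega, rfl⟩
      · rintro ⟨i, hi, rfl⟩
        rcases Nat.lt_or_ge i n with h' | h'
        · exact Or.inr ((ih _).2 ⟨i, h', rfl⟩)
        · have : i = n := by omega
          exact Or.inl (by rw [this])
  refine ⟨Set.range y, Set.infinite_range_of_injective hymono.injective, ?_, ?_⟩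
  · rintro _ ⟨n, rfl⟩
    exact (hFP n).2.1 ((hy n).2.1)
  · intro t ht
    set N := t.sup id + 1 with hN
    have htF : t ⊆ (F N).1 := by
      intro z hz
      obtain ⟨i, hiz⟩ := ht hz
      rw [hFn]
      refine ⟨i, ?_, hiz.symm⟩
      have h1 : i ≤ y i := hymono.le_apply
      have h2 : z ≤ t.sup id := Finset.le_sup (f := id) hz
      omega
    have hrejN : Rejects 𝒪 (s ∪ t) (F N).2 := (hFP N).2.2.2 t htF
    intro V hV hVY hVacc
    have hsubV : V \ ↑(F N).1 ⊆ (F N).2 := by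
      rintro v ⟨hvV, hvF⟩
      obtain ⟨m, rfl⟩ := hVY hvV
      have hm : ¬ m < N := fun hc => hvF ((hFn N _).2 ⟨m, hc, rfl⟩)
      exact hymem N m (by omega)
    have hVinf : (V \ ↑(F N).1).Infinite := hV.diff (Finset.finite_toSet _)
    exact hrejN _ hVinf hsubV (hVacc.anti Set.diff_subset)

end Fusion
section OpenCR

lemma open_CR {𝒪 : Set BaireSp} (hO : @IsOpen BaireSp ellTop 𝒪) : CompletelyRamsey 𝒪 := by
  intro s X hsX
  set X' := X.1 \ ↑s with hX'
  have hX'inf : X'.Infinite := X.2.diff (Finset.finite_toSet s)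
  have habove : ∀ a ∈ s, ∀ z ∈ X', a < z := fun a ha z hz => hsX.2 z hz.1 hz.2 a ha
  by_cases hrej : Rejects 𝒪 s X'
  · obtain ⟨Y', hY'inf, hY'X, hY'rej⟩ := reject_fusion hX'inf hrej
    refine ⟨⟨↑s ∪ Y', hY'inf.mono Set.subset_union_right⟩, ?_, ?_, Or.inr ?_⟩
    · exact Set.union_subset hsX.1 (fun z hz => (hY'X hz).1)
    · refine ⟨Set.subset_union_left, ?_⟩
      intro x hx hxs a ha
      rcases hx with h | h
      · exact absurd h hxs
      · exact habove a ha x (hY'X h)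
    · rw [Set.eq_empty_iff_forall_notMem]
      rintro Z ⟨⟨hZY, hsZ⟩, hZO⟩
      obtain ⟨t, W, ⟨hZW, htZ⟩, hcube⟩ := ell_isOpen_iff.1 hO Z hZO
      set u := s ∪ t with hu
      have huZ : ↑u ⊆ Z.1 := by
        intro a ha
        rcases Finset.mem_union.1 (by exact_mod_cast ha) with h | h
        · exact hsZ.1 (by exact_mod_cast h)
        · exact htZ.1 (by exact_mod_cast h)
      have huinit : InitSeg u Z.1 := initSeg_union hsZ htZ
      have ht' : ↑(u \ s) ⊆ Y' := by
        intro a ha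
        rw [Finset.coe_sdiff, Set.mem_diff] at ha
        have haZ : a ∈ Z.1 := huZ (by exact_mod_cast ha.1)
        rcases hZY haZ with h | h
        · exact absurd h ha.2
        · exact h
      have hrej' : Rejects 𝒪 u Y' := by
        have := hY'rej (u \ s) ht'
        rwa [Finset.union_sdiff_self_eq_union, hu, ← Finset.union_assoc,
          Finset.union_self] at this
      set V := (Y' ∩ W.1) \ ↑u with hV
      have hVinf : V.Infinite := by
        refine ((Z.2.diff (Finset.finite_toSet u)).mono ?_)
        rintro z ⟨hz, hzu⟩
        have hzY : z ∈ Y' := by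
          rcases hZY hz with h | h
          · exact absurd h (fun hc => hzu (by
              exact_mod_cast Finset.mem_union_left t (by exact_mod_cast hc)))
          · exact h
        exact ⟨⟨hzY, hZW hz⟩, hzu⟩
      refine hrej' V hVinf (fun z hz => hz.1.1) ?_
      intro Z' hZ'init hZ'sub
      refine hcube ⟨?_, ?_⟩
      · intro z hz
        rcases hZ'sub hz with h | h
        · exact hZW (huZ h)
        · exact h.1.2
      · constructor
        · intro a ha
          exact hZ'init.1 (by exact_mod_cast Finset.mem_union_right s (by exact_mod_cast ha))
        · intro x hx hxt a ha
          by_cases hxu : x ∈ u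
          · exact htZ.2 x (huZ (by exact_mod_cast hxu)) hxt a ha
          · exact hZ'init.2 x hx hxu a (Finset.mem_union_right s ha)
  · obtain ⟨V, hVinf, hVX, hVacc⟩ := not_rejects_iff.1 hrej
    refine ⟨⟨↑s ∪ V, hVinf.mono Set.subset_union_right⟩, ?_, ?_, Or.inl ?_⟩
    · exact Set.union_subset hsX.1 (fun z hz => (hVX hz).1)
    · refine ⟨Set.subset_union_left, ?_⟩
      intro x hx hxs a ha
      rcases hx with h | h
      · exact absurd h hxs
      · exact habove a ha x (hVX h)
    · rintro Z ⟨hZsub, hZinit⟩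
      exact hVacc Z hZinit hZsub

end OpenCR
section Meagre

lemma nwd_avoid {N : Set BaireSp} (hN : @IsNowhereDense BaireSp ellTop N)
    {u : Finset ℕ} {X' : Set ℕ} (hX' : X'.Infinite) (habv : ∀ a ∈ u, ∀ z ∈ X', a < z) :
    ∃ W : Set ℕ, W.Infinite ∧ W ⊆ X' ∧ Accepts Nᶜ u W := by
  letI := ellTop
  set Xb : BaireSp := ⟨↑u ∪ X', hX'.mono Set.subset_union_right⟩ with hXb
  have hinit : InitSeg u Xb.1 := by
    refine ⟨Set.subset_union_left, ?_⟩
    intro x hx hxs a ha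
    rcases hx with h | h
    · exact absurd h hxs
    · exact habv a ha x h
  have hOopen : IsOpen (closure N)ᶜ := isClosed_closure.isOpen_compl
  obtain ⟨Y, hYX, hYinit, hcase⟩ := open_CR hOopen u Xb hinit
  rcases hcase with hc | hc
  · refine ⟨Y.1 \ ↑u, Y.2.diff (Finset.finite_toSet u), ?_, ?_⟩
    · rintro z ⟨hz, hzu⟩
      rcases hYX hz with h | h
      · exact absurd h hzu
      · exact h
    · intro Z hZinit hZsub
      have : Z ∈ ellCube u Y := by
        refine ⟨?_, hZinit⟩
        intro z hz
        rcases hZsub hz with h | h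
        · exact hYinit.1 h
        · exact h.1
      have := hc this
      exact fun hZN => this (subset_closure hZN)
  · exfalso
    have hYmem : Y ∈ ellCube u Y := ⟨subset_rfl, hYinit⟩
    have hsub : ellCube u Y ⊆ closure N := by
      intro Z hZ
      by_contra hZc
      exact Set.eq_empty_iff_forall_notMem.1 hc Z ⟨hZ, hZc⟩
    have : ellCube u Y ⊆ interior (closure N) :=
      interior_maximal hsub (ellCube_isOpen u Y)
    rw [hN] at this
    exact this hYmem

lemma avoid_chain (L : List (Finset ℕ × Set BaireSp)) {X' : Set ℕ} (hX' : X'.Infinite)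
    (h : ∀ p ∈ L, @IsNowhereDense BaireSp ellTop p.2 ∧ ∀ a ∈ p.1, ∀ z ∈ X', a < z) :
    ∃ W : Set ℕ, W.Infinite ∧ W ⊆ X' ∧ ∀ p ∈ L, Accepts p.2ᶜ p.1 W := by
  induction L generalizing X' with
  | nil => exact ⟨X', hX', subset_rfl, by simp⟩
  | cons p L ih =>
    obtain ⟨hp1, hp2⟩ := h p (List.mem_cons_self)
    obtain ⟨W₁, hW₁, hW₁X, hacc⟩ := nwd_avoid hp1 hX' hp2
    obtain ⟨W, hW, hWW₁, haccL⟩ := ih hW₁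
      (fun q hq => ⟨(h q (List.mem_cons_of_mem _ hq)).1,
        fun a ha z hz => (h q (List.mem_cons_of_mem _ hq)).2 a ha z (hW₁X hz)⟩)
    refine ⟨W, hW, hWW₁.trans hW₁X, ?_⟩
    intro q hq
    rw [List.mem_cons] at hq
    rcases hq with rfl | hq
    · exact hacc.anti hWW₁
    · exact haccL q hq

lemma meagre_null {M : Set BaireSp} (hM : @IsMeagre BaireSp ellTop M) :
    ∀ (s : Finset ℕ) (X : BaireSp), InitSeg s X.1 →
      ∃ Y : BaireSp, Y.1 ⊆ X.1 ∧ InitSeg s Y.1 ∧ ellCube s Y ∩ M = ∅ := by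
  classical
  letI := ellTop
  obtain ⟨S, hSnwd, hScnt, hSsub⟩ := isMeagre_iff_countable_union_isNowhereDense.1 hM
  set S' : Set (Set BaireSp) := insert ∅ S with hS'
  have hS'nwd : ∀ t ∈ S', IsNowhereDense t := by
    rintro t (rfl | ht)
    · exact isNowhereDense_empty
    · exact hSnwd t ht
  obtain ⟨N, hN⟩ := (hScnt.insert ∅).exists_eq_range (Set.insert_nonempty _ _)
  have hNnwd : ∀ k, IsNowhereDense (N k) := fun k =>
    hS'nwd (N k) (by rw [hS', hN]; exact Set.mem_range_self k)
  have hMN : M ⊆ ⋃ k, N k := by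
    intro z hz
    obtain ⟨t, ht, hzt⟩ := hSsub hz
    have : t ∈ Set.range N := by rw [← hN]; exact Set.mem_insert_of_mem _ ht
    obtain ⟨k, rfl⟩ := this
    exact Set.mem_iUnion.2 ⟨k, hzt⟩
  intro s X hsX
  set X₀ := X.1 \ ↑s with hX₀
  have hX₀inf : X₀.Infinite := X.2.diff (Finset.finite_toSet s)
  have habove : ∀ a ∈ s, ∀ z ∈ X₀, a < z := fun a ha z hz => hsX.2 z hz.1 hz.2 a ha
  -- fusion
  set P : ℕ → Finset ℕ × Set ℕ → Prop := fun n p =>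
    p.2.Infinite ∧ p.2 ⊆ X₀ ∧ (∀ a ∈ p.1, ∀ z ∈ p.2, a < z) ∧
      ∀ t ⊆ p.1, ∀ k < n, Accepts (N k)ᶜ (s ∪ t) p.2 with hP
  set R : ℕ → Finset ℕ × Set ℕ → Finset ℕ × Set ℕ → Prop := fun _ p q =>
    ∃ m, q.1 = insert m p.1 ∧ m ∈ p.2 ∧ q.2 ⊆ p.2 ∧ ∀ z ∈ q.2, m < z with hR
  have step : ∀ n p, P n p → ∃ q, P (n + 1) q ∧ R n p q := by
    rintro n ⟨F, X'⟩ ⟨hinf, hsub, habv, hacc⟩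
    set y := sInf X' with hy
    have hyX : y ∈ X' := Nat.sInf_mem hinf.nonempty
    set X'a := X' ∩ Set.Ioi y with hX'a
    have hX'ainf : X'a.Infinite := by
      have : X'a = X' \ Set.Iic y := by
        ext z
        simp only [hX'a, Set.mem_inter_iff, Set.mem_diff, Set.mem_Ioi, Set.mem_Iic]
        constructor <;> rintro ⟨h1, h2⟩ <;> exact ⟨h1, by omega⟩
      rw [this]
      exact hinf.diff (Set.finite_Iic _)
    set L : List (Finset ℕ × Set BaireSp) :=
      ((insert y F).powerset.toList ×ˢ List.range (n+1)).map
        (fun p => (s ∪ p.1, N p.2)) with hL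
    have hLmem : ∀ t ⊆ insert y F, ∀ k < n + 1, (s ∪ t, N k) ∈ L := by
      intro t ht k hk
      exact List.mem_map.2 ⟨(t, k), List.pair_mem_product.2
        ⟨Finset.mem_toList.2 (Finset.mem_powerset.2 ht), List.mem_range.2 hk⟩, rfl⟩
    have hLcond : ∀ p ∈ L, IsNowhereDense p.2 ∧ ∀ a ∈ p.1, ∀ z ∈ X'a, a < z := by
      intro p hp
      obtain ⟨⟨t, k⟩, htk, rfl⟩ := List.mem_map.1 hp
      obtain ⟨ht', hk'⟩ := List.pair_mem_product.1 htk
      have ht : t ⊆ insert y F := Finset.mem_powerset.1 (Finset.mem_toList.1 ht')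
      refine ⟨hNnwd k, ?_⟩
      intro a ha z hz
      rcases Finset.mem_union.1 ha with h | h
      · exact habove a h z (hsub hz.1)
      · rcases Finset.mem_insert.1 (ht h) with rfl | h'
        · exact hz.2
        · exact habv a h' z hz.1
    obtain ⟨W, hWinf, hWX, hWacc⟩ := avoid_chain L hX'ainf hLcond
    refine ⟨⟨insert y F, W⟩, ⟨hWinf, (hWX.trans Set.inter_subset_left).trans hsub, ?_, ?_⟩,
      y, rfl, hyX, hWX.trans Set.inter_subset_left, fun z hz => (hWX hz).2⟩
    · intro a ha z hz
      rcases Finset.mem_insert.1 ha with rfl | ha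
      · exact (hWX hz).2
      · exact habv a ha z ((hWX hz).1)
    · intro t ht k hk
      exact hWacc (s ∪ t, N k) (hLmem t ht k hk)
  obtain ⟨F, hF0, hFP, hFR⟩ := exists_seq P R (∅, X₀)
    ⟨hX₀inf, subset_rfl, by simp, fun t ht k hk => by omega⟩ step
  set y : ℕ → ℕ := fun n => (hFR n).choose with hydef
  have hy : ∀ n, (F (n+1)).1 = insert (y n) (F n).1 ∧ y n ∈ (F n).2 ∧
      (F (n+1)).2 ⊆ (F n).2 ∧ ∀ z ∈ (F (n+1)).2, y n < z := fun n => (hFR n).choose_spec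
  have hchain : ∀ m n, n ≤ m → (F m).2 ⊆ (F n).2 := by
    intro m n h
    induction m with
    | zero => simp [Nat.le_zero.1 h]
    | succ m ih =>
      rcases Nat.lt_or_ge n (m+1) with h' | h'
      · exact (hy m).2.2.1.trans (ih (Nat.lt_succ_iff.1 h'))
      · have : n = m + 1 := le_antisymm h h'
        simp [this]
  have hymem : ∀ n m, n ≤ m → y m ∈ (F n).2 := fun n m h => hchain m n h (hy m).2.1
  have hymono : StrictMono y := by
    apply strictMono_nat_of_lt_succ
    intro n
    exact (hy n).2.2.2 _ (hymem (n+1) (n+1) le_rfl)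
  have hFn : ∀ n, ∀ z, z ∈ (F n).1 ↔ ∃ i < n, z = y i := by
    intro n
    induction n with
    | zero => simp [hF0]
    | succ n ih =>
      intro z
      rw [(hy n).1, Finset.mem_insert]
      constructor
      · rintro (rfl | h)
        · exact ⟨n, Nat.lt_succ_self n, rfl⟩
        · obtain ⟨i, hi, rfl⟩ := (ih z).1 h
          exact ⟨i, by omega, rfl⟩
      · rintro ⟨i, hi, rfl⟩
        rcases Nat.lt_or_ge i n with h' | h'
        · exact Or.inr ((ih _).2 ⟨i, h', rfl⟩)
        · have : i = n := by omega
          exact Or.inl (by rw [this])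
  have hyX₀ : ∀ n, y n ∈ X₀ := fun n => (hFP n).2.1 (hy n).2.1
  refine ⟨⟨↑s ∪ Set.range y,
      (Set.infinite_range_of_injective hymono.injective).mono Set.subset_union_right⟩,
    ?_, ?_, ?_⟩
  · refine Set.union_subset hsX.1 ?_
    rintro _ ⟨n, rfl⟩
    exact (hyX₀ n).1
  · refine ⟨Set.subset_union_left, ?_⟩
    intro x hx hxs a ha
    rcases hx with h | h
    · exact absurd h hxs
    · obtain ⟨n, rfl⟩ := h
      exact habove a ha _ (hyX₀ n)
  · rw [Set.eq_empty_iff_forall_notMem]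
    rintro Z ⟨⟨hZY, hZinit⟩, hZM⟩
    obtain ⟨k, hZk⟩ := Set.mem_iUnion.1 (hMN hZM)
    set n := k + 1 with hn
    set t := (F n).1.filter (· ∈ Z.1) with ht
    have htF : t ⊆ (F n).1 := Finset.filter_subset _ _
    have hacc : Accepts (N k)ᶜ (s ∪ t) (F n).2 :=
      (hFP n).2.2.2 t htF k (by omega)
    -- every element of Z is in s, in t, or in (F n).2
    have hZsplit : ∀ z ∈ Z.1, z ∈ (↑(s ∪ t) : Set ℕ) ∨ z ∈ (F n).2 := by
      intro z hz
      rcases hZY hz with h | h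
      · exact Or.inl (by exact_mod_cast Finset.mem_union_left _ (by exact_mod_cast h))
      · obtain ⟨m, rfl⟩ := h
        rcases Nat.lt_or_ge m n with h' | h'
        · left
          have : y m ∈ t := Finset.mem_filter.2 ⟨(hFn n _).2 ⟨m, h', rfl⟩, hz⟩
          exact_mod_cast Finset.mem_union_right _ this
        · exact Or.inr (hymem n m h')
    have hZinit' : InitSeg (s ∪ t) Z.1 := by
      constructor
      · intro a ha
        rcases Finset.mem_union.1 (by exact_mod_cast ha) with h | h
        · exact hZinit.1 (by exact_mod_cast h)
        · exact (Finset.mem_filter.1 h).2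
      · intro x hx hxst a ha
        have hxs : x ∉ s := fun hc => hxst (Finset.mem_union_left _ hc)
        rcases Finset.mem_union.1 ha with h | h
        · exact hZinit.2 x hx hxs a h
        · -- a ∈ t ⊆ F n, x = y m with m ≥ n
          have haF : a ∈ (F n).1 := htF h
          have hxX : x ∈ (F n).2 := by
            rcases hZsplit x hx with h' | h'
            · exact absurd (by exact_mod_cast h') hxst
            · exact h'
          exact (hFP n).2.2.1 a haF x hxX
    exact hacc Z hZinit' (fun z hz => hZsplit z hz) hZk

end Meagre
/-- Ellentuck's theorem: a subset of `[ℕ]^ω` is completely Ramsey iff it has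
the property of Baire in the Ellentuck topology. -/
theorem ellentuck (𝒳 : Set BaireSp) :
    CompletelyRamsey 𝒳 ↔ EllBaireProperty 𝒳 := by
  letI := ellTop
  constructor
  · -- completely Ramsey → Baire property
    intro hCR
    refine ⟨interior 𝒳, isOpen_interior, ?_⟩
    have hsd : symmDiff 𝒳 (interior 𝒳) = 𝒳 \ interior 𝒳 := by
      rw [symmDiff_def]
      have : interior 𝒳 \ 𝒳 = ∅ := by
        rw [Set.diff_eq_empty]
        exact interior_subset
      simp only [Set.sup_eq_union, this, Set.union_empty]
    rw [hsd]
    have hnwd : IsNowhereDense (𝒳 \ interior 𝒳) := by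
      rw [IsNowhereDense, Set.eq_empty_iff_forall_notMem]
      intro x hx
      obtain ⟨t, W, ⟨hxW, htx⟩, hcube⟩ :=
        ell_isOpen_iff.1 (isOpen_interior (s := closure (𝒳 \ interior 𝒳))) x hx
      obtain ⟨Y, hYx, hYinit, hcase⟩ := hCR t x htx
      have hcube' : ellCube t Y ⊆ closure (𝒳 \ interior 𝒳) := by
        intro Z hZ
        exact interior_subset (hcube ⟨hZ.1.trans (hYx.trans hxW), hZ.2⟩)
      have hYmem : Y ∈ ellCube t Y := ⟨subset_rfl, hYinit⟩
      obtain ⟨Z, hZcube, hZX, hZU⟩ : ∃ Z, Z ∈ ellCube t Y ∧ Z ∈ 𝒳 ∧ Z ∉ interior 𝒳 := by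
        have := (mem_closure_iff.1 (hcube' hYmem)) (ellCube t Y)
          (ellCube_isOpen t Y) hYmem
        obtain ⟨Z, hZ1, hZ2, hZ3⟩ := this
        exact ⟨Z, hZ1, hZ2, hZ3⟩
      rcases hcase with hc | hc
      · exact hZU (interior_maximal hc (ellCube_isOpen t Y) hZcube)
      · exact Set.eq_empty_iff_forall_notMem.1 hc Z ⟨hZcube, hZX⟩
    refine isMeagre_iff_countable_union_isNowhereDense.2
      ⟨{closure (𝒳 \ interior 𝒳)}, ?_, Set.countable_singleton _, ?_⟩
    · rintro t rfl
      exact hnwd.closure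
    · intro z hz
      exact ⟨closure (𝒳 \ interior 𝒳), rfl, subset_closure hz⟩
  · -- Baire property → completely Ramsey
    rintro ⟨U, hU, hM⟩
    intro s X hsX
    obtain ⟨Y₁, hY₁X, hY₁init, hY₁⟩ := meagre_null hM s X hsX
    obtain ⟨Y₂, hY₂Y₁, hY₂init, hcase⟩ := open_CR hU s Y₁ hY₁init
    have hsub : ellCube s Y₂ ⊆ ellCube s Y₁ := fun Z hZ => ⟨hZ.1.trans hY₂Y₁, hZ.2⟩
    have hnosd : ∀ Z ∈ ellCube s Y₂, Z ∉ symmDiff 𝒳 U := fun Z hZ hc =>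
      Set.eq_empty_iff_forall_notMem.1 hY₁ Z ⟨hsub hZ, hc⟩
    refine ⟨Y₂, hY₂Y₁.trans hY₁X, hY₂init, ?_⟩
    rcases hcase with hc | hc
    · left
      intro Z hZ
      by_contra hZX
      exact hnosd Z hZ (Set.mem_symmDiff.2 (Or.inr ⟨hc hZ, hZX⟩))
    · right
      rw [Set.eq_empty_iff_forall_notMem]
      rintro Z ⟨hZcube, hZX⟩
      have hZU : Z ∉ U := fun hcc => Set.eq_empty_iff_forall_notMem.1 hc Z ⟨hZcube, hcc⟩
      exact hnosd Z hZcube (Set.mem_symmDiff.2 (Or.inl ⟨hZX, hZU⟩))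
end
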